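/- In the poset ℙ_𝒢 (as defined for the mho application), for every condition p = (f, ⟨k_ξ : ξ ∈ D⟩) and every ξ ∈ dom(f), there is a condition p' extending p with ξ ∈ D^{p'}; i.e., one can always choose a fresh color k not in g_{f(ξ)}''range(f) such that rank({γ < f(ξ) : g_{f(ξ)}(γ) ≠ k}, f(ξ)) = rank(f(ξ), f(ξ)). -/

import Mathlib

noncomputable section

open Set

/-- The first uncountable ordinal. -/
def omega1 : Ordinal := (Cardinal.aleph 1).ord

/-- `δ` is a limit point of the set of ordinals `X`. -/
def IsLimitPointOf (X : Set Ordinal) (δ : Ordinal) : Prop :=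
  ∀ β < δ, ∃ ε ∈ X, β < ε ∧ ε < δ

/-- `rankGE X δ μ` says that the Cantor–Bendixson rank of `δ` with respect to `X`
is at least `μ`:  `rank(X, δ) ≥ 1` iff `δ` is a limit point of `X`, and for `μ > 1`,
`rank(X, δ) ≥ μ` iff for every `η < μ`, `δ` is a limit of ordinals `ε` with
`rank(X, ε) ≥ η`. -/
def rankGE (X : Set Ordinal) (δ μ : Ordinal) : Prop :=
  ∀ η : Ordinal, η < μ →
    ((η = 0 → IsLimitPointOf X δ) ∧
     (η ≠ 0 → ∀ β < δ, ∃ ε, β < ε ∧ ε < δ ∧ rankGE X ε η))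
termination_by μ
decreasing_by assumption

/-- A club (closed unbounded) subset of `ω₁`. -/
def IsClubOmega1 (C : Set Ordinal) : Prop :=
  C ⊆ Set.Iio omega1 ∧ (∀ α < omega1, ∃ β ∈ C, α < β) ∧
    (∀ δ, δ < omega1 → IsLimitPointOf C δ → δ ∈ C)

/-- A ladder system on `ω₁`: each countable limit ordinal `δ` gets a cofinal subset
`A δ ⊆ δ` of order type `ω`. -/
def IsLadder (A : Ordinal → Set Ordinal) : Prop :=
  ∀ δ, δ < omega1 → Order.IsSuccLimit δ →
    A δ ⊆ Set.Iio δ ∧ (∀ β < δ, ∃ γ ∈ A δ, β < γ) ∧ (A δ).Infinite ∧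
      ∀ x < δ, (A δ ∩ Set.Iio x).Finite

/-- A normal (strictly increasing and continuous) function on the ordinals below `ω₁`. -/
def IsNormalW1 (F : Ordinal → Ordinal) : Prop :=
  (∀ α, α < omega1 → F α < omega1) ∧
  (∀ α β, α < β → β < omega1 → F α < F β) ∧
  (∀ δ, δ < omega1 → Order.IsSuccLimit δ → F δ = sSup (F '' Set.Iio δ))

/-- An (additively) indecomposable nonzero ordinal. -/
def Indecomposable (δ : Ordinal) : Prop :=
  0 < δ ∧ ∀ β < δ, ∀ γ < δ, β + γ < δ


universe v

/-- A condition of the poset `ℙ_𝒢` used to kill an instance of `℧`. -/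
structure PGCond (g : (δ : Ordinal) → Set.Iio δ → ℕ) where
  s : Finset Ordinal
  f : Ordinal → Ordinal
  D : Finset Ordinal
  k : Ordinal → ℕ
  /-- (1): `f` is finite strictly increasing from `ω₁` to `ω₁`. -/
  hs : ∀ ξ ∈ s, ξ < omega1 ∧ f ξ < omega1
  hmono : ∀ ξ ∈ s, ∀ ζ ∈ s, ξ < ζ → f ξ < f ζ
  /-- (2): `rank(f ξ, f ξ) ≥ ξ`. -/
  hrank : ∀ ξ ∈ s, rankGE (Set.Iio (f ξ)) (f ξ) ξ
  hD : D ⊆ s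
  /-- (3): for `ξ ∈ D`, `g_{f ξ} '' range f` avoids `k ξ` and
  `rank({γ < f ξ : g_{f ξ} γ ≠ k ξ}, f ξ) = rank(f ξ, f ξ)`. -/
  hk : ∀ ξ ∈ D,
    (∀ ζ ∈ s, ∀ h : f ζ < f ξ, g (f ξ) ⟨f ζ, h⟩ ≠ k ξ) ∧
    (∀ μ : Ordinal.{v}, rankGE {γ | ∃ h : γ < f ξ, g (f ξ) ⟨γ, h⟩ ≠ k ξ} (f ξ) μ ↔
      rankGE (Set.Iio (f ξ)) (f ξ) μ)

/-- Extension in `ℙ_𝒢`: `p₁ ≤ p₀`. -/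
def PGLe {g : (δ : Ordinal) → Set.Iio δ → ℕ} (p₁ p₀ : PGCond g) : Prop :=
  p₀.s ⊆ p₁.s ∧ (∀ ξ ∈ p₀.s, p₁.f ξ = p₀.f ξ) ∧ p₀.D ⊆ p₁.D ∧
    ∀ ξ ∈ p₀.D, p₁.k ξ = p₀.k ξ

theorem rankGE_def (X : Set Ordinal) (δ μ : Ordinal) : rankGE X δ μ ↔ ∀ η : Ordinal, η < μ →
    ((η = 0 → IsLimitPointOf X δ) ∧
     (η ≠ 0 → ∀ β < δ, ∃ ε, β < ε ∧ ε < δ ∧ rankGE X ε η)) := by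
  rw [rankGE]

/-- The condition required at level `η`. -/
def rankClause (X : Set Ordinal) (δ η : Ordinal) : Prop :=
  (η = 0 → IsLimitPointOf X δ) ∧
  (η ≠ 0 → ∀ β < δ, ∃ ε, β < ε ∧ ε < δ ∧ rankGE X ε η)

theorem rankGE_iff_clause (X : Set Ordinal) (δ μ : Ordinal) :
    rankGE X δ μ ↔ ∀ η < μ, rankClause X δ η := by
  rw [rankGE_def]; rfl

theorem rankGE_mono_ord {X : Set Ordinal} {δ μ₁ μ₂ : Ordinal} (h : μ₁ ≤ μ₂)
    (hr : rankGE X δ μ₂) : rankGE X δ μ₁ := by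
  rw [rankGE_iff_clause] at hr ⊢
  exact fun η hη => hr η (lt_of_lt_of_le hη h)

theorem rankClause_anti {X : Set Ordinal} {δ η₁ η₂ : Ordinal} (h : η₁ ≤ η₂)
    (hc : rankClause X δ η₂) : rankClause X δ η₁ := by
  rcases eq_or_ne η₂ 0 with rfl | hne
  · have h0 : η₁ = 0 := nonpos_iff_eq_zero.mp h
    exact h0 ▸ hc
  constructor
  · rintro rfl
    intro β hβ
    obtain ⟨ε, hβε, hεδ, hε⟩ := hc.2 hne β hβ
    have hlim : IsLimitPointOf X ε :=
      ((rankGE_iff_clause X ε η₂).mp hε 0 (pos_iff_ne_zero.mpr hne)).1 rfl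
    obtain ⟨γ, hγX, hβγ, hγε⟩ := hlim β hβε
    exact ⟨γ, hγX, hβγ, hγε.trans hεδ⟩
  · intro h1 β hβ
    obtain ⟨ε, hβε, hεδ, hε⟩ := hc.2 hne β hβ
    exact ⟨ε, hβε, hεδ, rankGE_mono_ord h hε⟩

theorem rankGE_mono_set {A B : Set Ordinal} (hAB : A ⊆ B) :
    ∀ μ δ, rankGE A δ μ → rankGE B δ μ := by
  intro μ
  induction μ using Ordinal.induction with
  | h μ IH =>
    intro δ h
    rw [rankGE_iff_clause] at h ⊢
    intro η hη
    obtain ⟨h0, h1⟩ := h η hη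
    constructor
    · rintro rfl
      intro β hβ
      obtain ⟨ε, hε, h2, h3⟩ := h0 rfl β hβ
      exact ⟨ε, hAB hε, h2, h3⟩
    · intro hne β hβ
      obtain ⟨ε, h2, h3, h4⟩ := h1 hne β hβ
      exact ⟨ε, h2, h3, IH η hη ε h4⟩

theorem rankGE_union {A B : Set Ordinal} :
    ∀ μ δ, rankGE (A ∪ B) δ μ → rankGE A δ μ ∨ rankGE B δ μ := by
  intro μ
  induction μ using Ordinal.induction with
  | h μ IH =>
    intro δ h
    by_contra hcon
    push_neg at hcon
    obtain ⟨hA, hB⟩ := hcon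
    rw [rankGE_iff_clause] at hA hB
    push_neg at hA hB
    obtain ⟨ηA, hηA, hcA⟩ := hA
    obtain ⟨ηB, hηB, hcB⟩ := hB
    set η := max ηA ηB with hηdef
    have hηlt : η < μ := max_lt hηA hηB
    have hcA' : ¬ rankClause A δ η := fun hc => hcA (rankClause_anti (le_max_left _ _) hc)
    have hcB' : ¬ rankClause B δ η := fun hc => hcB (rankClause_anti (le_max_right _ _) hc)
    have hUn : rankClause (A ∪ B) δ η := (rankGE_iff_clause _ _ _).mp h η hηlt
    rcases eq_or_ne η 0 with hη0 | hη0
    · -- η = 0 : limit point case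
      have hlim : IsLimitPointOf (A ∪ B) δ := hUn.1 hη0
      have hLA : ¬ IsLimitPointOf A δ :=
        fun hL => hcA' ⟨fun _ => hL, fun hne => (absurd hη0 hne)⟩
      have hLB : ¬ IsLimitPointOf B δ :=
        fun hL => hcB' ⟨fun _ => hL, fun hne => (absurd hη0 hne)⟩
      unfold IsLimitPointOf at hLA hLB
      push_neg at hLA hLB
      obtain ⟨βA, hβA, hA'⟩ := hLA
      obtain ⟨βB, hβB, hB'⟩ := hLB
      obtain ⟨ε, hεAB, hβε, hεδ⟩ := hlim (max βA βB) (max_lt hβA hβB)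
      rcases hεAB with hεA | hεB
      · exact absurd hεδ (not_lt_of_ge (hA' ε hεA (lt_of_le_of_lt (le_max_left _ _) hβε)))
      · exact absurd hεδ (not_lt_of_ge (hB' ε hεB (lt_of_le_of_lt (le_max_right _ _) hβε)))
    · -- η ≠ 0
      have hQA : ¬ (∀ β < δ, ∃ ε, β < ε ∧ ε < δ ∧ rankGE A ε η) :=
        fun hq => hcA' ⟨fun h0 => absurd h0 hη0, fun _ => hq⟩
      have hQB : ¬ (∀ β < δ, ∃ ε, β < ε ∧ ε < δ ∧ rankGE B ε η) :=
        fun hq => hcB' ⟨fun h0 => absurd h0 hη0, fun _ => hq⟩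
      push_neg at hQA hQB
      obtain ⟨βA, hβA, hA'⟩ := hQA
      obtain ⟨βB, hβB, hB'⟩ := hQB
      obtain ⟨ε, hβε, hεδ, hε⟩ := hUn.2 hη0 (max βA βB) (max_lt hβA hβB)
      rcases IH η hηlt ε hε with h' | h'
      · exact hA' ε (lt_of_le_of_lt (le_max_left _ _) hβε) hεδ h'
      · exact hB' ε (lt_of_le_of_lt (le_max_right _ _) hβε) hεδ h'

theorem omega1_lift : Ordinal.lift.{v, u} omega1.{u} = omega1.{max u v} := by
  rw [omega1, omega1, Cardinal.lift_ord]
  simp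

/-- Cross-universe transfer for `rankGE`. -/
theorem rankGE_cross {X : Set Ordinal.{a}} :
    ∀ (μ : Ordinal.{v}) (δ : Ordinal.{a}) (ν : Ordinal.{w}),
      Ordinal.lift.{w} μ ≤ Ordinal.lift.{v} ν → rankGE X δ ν → rankGE X δ μ := by
  intro μ
  induction μ using Ordinal.induction with
  | h μ IH =>
    intro δ ν hle h
    rw [rankGE_iff_clause] at h ⊢
    intro η hη
    have hlt : Ordinal.lift.{w} η < Ordinal.lift.{v} ν :=
      lt_of_lt_of_le (Ordinal.lift_lt.mpr hη) hle
    obtain ⟨η', hη'⟩ := Ordinal.mem_range_lift_of_le (le_of_lt hlt)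
    have hη'ν : η' < ν := by
      rw [← Ordinal.lift_lt.{v}]
      rw [hη']; exact hlt
    have hc' := h η' hη'ν
    constructor
    · rintro rfl
      apply hc'.1
      have : Ordinal.lift.{v} η' = 0 := by rw [hη']; simp
      exact Ordinal.lift_inj.mp (this.trans Ordinal.lift_zero.symm)
    · intro hne β hβ
      have hne' : η' ≠ 0 := by
        rintro rfl
        apply hne
        rw [Ordinal.lift_zero] at hη'
        exact Ordinal.lift_inj.mp (hη'.symm.trans Ordinal.lift_zero.symm)
      obtain ⟨ε, h1, h2, h3⟩ := hc'.2 hne' β hβ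
      exact ⟨ε, h1, h2, IH η hη ε η' (le_of_eq hη'.symm) h3⟩

theorem rankGE_cross_iff {X : Set Ordinal.{a}} {δ : Ordinal.{a}} {μ : Ordinal.{v}}
    {ν : Ordinal.{w}} (h : Ordinal.lift.{w} μ = Ordinal.lift.{v} ν) :
    rankGE X δ μ ↔ rankGE X δ ν :=
  ⟨rankGE_cross ν δ μ (le_of_eq h.symm), rankGE_cross μ δ ν (le_of_eq h)⟩

/-- The rank of `δ > 0` is bounded by `δ` (cross-universe form). -/
theorem rankGE_bound {X : Set Ordinal.{a}} :
    ∀ (δ : Ordinal.{a}), 0 < δ → ∀ (μ : Ordinal.{v}), rankGE X δ μ →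
      Ordinal.lift.{a} μ ≤ Ordinal.lift.{v} δ := by
  intro δ
  induction δ using Ordinal.induction with
  | h δ IH =>
    intro hδ μ h
    by_contra hlt
    push_neg at hlt
    obtain ⟨η, hη⟩ := Ordinal.mem_range_lift_of_le (le_of_lt hlt)
    have hημ : η < μ := by
      rw [← Ordinal.lift_lt.{a}, hη]; exact hlt
    have hne : η ≠ 0 := by
      rintro rfl
      rw [Ordinal.lift_zero] at hη
      exact absurd (Ordinal.lift_inj.mp (hη.symm.trans Ordinal.lift_zero.symm)) (ne_of_gt hδ)
    have hc := (rankGE_iff_clause X δ μ).mp h η hημ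
    obtain ⟨ε, h0ε, hεδ, hε⟩ := hc.2 hne 0 hδ
    have hle2 := IH ε hεδ h0ε η hε
    rw [hη] at hle2
    exact absurd (lt_of_le_of_lt hle2 (Ordinal.lift_lt.mpr hεδ)) (lt_irrefl _)

/-- Transfer the rank-equality condition of `ℙ_𝒢` between universes. -/
theorem rankGE_iff_transfer {S : Set Ordinal.{a}} {δ : Ordinal.{a}}
    (hS : S ⊆ Set.Iio δ) (hδ : δ < omega1.{a})
    (H : ∀ μ : Ordinal.{v}, rankGE S δ μ ↔ rankGE (Set.Iio δ) δ μ) :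
    ∀ μ : Ordinal.{w}, rankGE S δ μ ↔ rankGE (Set.Iio δ) δ μ := by
  rcases eq_or_lt_of_le (zero_le (a := δ)) with hδ0 | hδ0
  · have hSe : S = Set.Iio δ := by
      apply subset_antisymm hS
      intro γ hγ
      rw [← hδ0] at hγ
      exact absurd hγ (not_lt_of_ge (zero_le (a := γ)))
    rw [hSe]
    intro μ; rfl
  intro μ
  constructor
  · exact rankGE_mono_set hS μ δ
  · intro h
    have hb : Ordinal.lift.{a} μ ≤ Ordinal.lift.{w} δ := rankGE_bound δ hδ0 μ h
    obtain ⟨ν, hν⟩ := Ordinal.mem_range_lift_of_le hb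
    -- find a copy of ν in universe v
    have hν1 : Ordinal.lift.{v} ν < Ordinal.lift.{a} omega1.{v} := by
      have h1 : ν ≤ δ := by
        rw [← Ordinal.lift_le.{w}, hν]; exact hb
      have h2 : Ordinal.lift.{v} ν < Ordinal.lift.{v} omega1.{a} :=
        Ordinal.lift_lt.mpr (lt_of_le_of_lt h1 hδ)
      rw [omega1_lift] at h2 ⊢
      exact h2
    obtain ⟨ν', hν'⟩ := Ordinal.mem_range_lift_of_le (le_of_lt hν1)
    have e1 : rankGE S δ μ ↔ rankGE S δ ν' := by
      refine (rankGE_cross_iff (μ := μ) (ν := ν) hν.symm).trans ?_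
      exact rankGE_cross_iff hν'.symm
    have e2 : rankGE (Set.Iio δ) δ μ ↔ rankGE (Set.Iio δ) δ ν' := by
      refine (rankGE_cross_iff (μ := μ) (ν := ν) hν.symm).trans ?_
      exact rankGE_cross_iff hν'.symm
    exact e1.mpr ((H ν').mpr (e2.mp h))

/-- every condition of `ℙ_𝒢` can be extended to one putting any
prescribed `ξ ∈ dom f` into the `D`-part. -/
theorem stmt18 (g : (δ : Ordinal) → Set.Iio δ → ℕ)
    (hg : ∀ δ, δ < omega1 → Continuous (g δ))
    (p : PGCond g) (ξ : Ordinal) (hξ : ξ ∈ p.s) :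
    ∃ p' : PGCond g, PGLe p' p ∧ ξ ∈ p'.D := by
  by_cases hmem : ξ ∈ p.D
  · refine ⟨⟨p.s, p.f, p.D, p.k, p.hs, p.hmono, p.hrank, p.hD, fun ζ hζ =>
      ⟨(p.hk ζ hζ).1, rankGE_iff_transfer (fun γ hγ => hγ.1)
        (p.hs ζ (p.hD hζ)).2 (p.hk ζ hζ).2⟩⟩,
      ⟨subset_refl _, fun _ _ => rfl, subset_refl _, fun _ _ => rfl⟩, hmem⟩
  set δ := p.f ξ with hδ
  -- the set of colors realized on the range of f below δ
  set Tfun : Ordinal → ℕ := fun ζ => if h : p.f ζ < δ then g δ ⟨p.f ζ, h⟩ else 0 with hTfun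
  set T : Set ℕ := Tfun '' ↑p.s with hT
  have hTfin : T.Finite := (p.s.finite_toSet).image _
  -- the (at most one) bad color
  set S : ℕ → Set Ordinal := fun k => {γ | ∃ h : γ < δ, g δ ⟨γ, h⟩ ≠ k} with hS
  have hSsub : ∀ k, S k ⊆ Set.Iio δ := fun k γ hγ => hγ.1
  have hScover : ∀ k k', k ≠ k' → Set.Iio δ ⊆ S k ∪ S k' := by
    intro k k' hkk' γ hγ
    by_cases hv : g δ ⟨γ, hγ⟩ = k
    · exact Or.inr ⟨hγ, hv ▸ hkk'⟩
    · exact Or.inl ⟨hγ, hv⟩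
  set Bad : Set ℕ := {k | ∃ μ : Ordinal.{0}, rankGE (Set.Iio δ) δ μ ∧ ¬ rankGE (S k) δ μ} with hBad
  have hBadSub : Bad.Subsingleton := by
    intro k hk k' hk'
    by_contra hkk'
    obtain ⟨μ, hμ, hμ'⟩ := hk
    obtain ⟨ν, hν, hν'⟩ := hk'
    rcases le_total μ ν with hle | hle
    · have hfull : rankGE (S k ∪ S k') δ ν :=
        rankGE_mono_set (hScover k k' hkk') ν δ hν
      rcases rankGE_union ν δ hfull with h' | h'
      · exact hμ' (rankGE_mono_ord hle h')
      · exact hν' h'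
    · have hfull : rankGE (S k ∪ S k') δ μ :=
        rankGE_mono_set (hScover k k' hkk') μ δ hμ
      rcases rankGE_union μ δ hfull with h' | h'
      · exact hμ' h'
      · exact hν' (rankGE_mono_ord hle h')
  have hfin : (T ∪ Bad).Finite := hTfin.union hBadSub.finite
  obtain ⟨k, hkT⟩ := (hfin.infinite_compl).nonempty
  rw [Set.mem_compl_iff, Set.mem_union] at hkT
  push_neg at hkT
  obtain ⟨hk1, hk2⟩ := hkT
  -- properties of k
  have hkfresh : ∀ ζ ∈ p.s, ∀ h : p.f ζ < δ, g δ ⟨p.f ζ, h⟩ ≠ k := by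
    intro ζ hζ h hcon
    apply hk1
    refine ⟨ζ, hζ, ?_⟩
    rw [hTfun]; simp only [dif_pos h]; exact hcon
  have hkgood : ∀ μ : Ordinal.{0}, rankGE (S k) δ μ ↔ rankGE (Set.Iio δ) δ μ := by
    intro μ
    constructor
    · exact rankGE_mono_set (hSsub k) μ δ
    · intro h
      by_contra hcon
      exact hk2 ⟨μ, h, hcon⟩
  refine ⟨⟨p.s, p.f, insert ξ p.D, fun ζ => if ζ = ξ then k else p.k ζ,
    p.hs, p.hmono, p.hrank, Finset.insert_subset hξ p.hD, ?_⟩, ?_, ?_⟩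
  · intro ζ hζ
    rcases Finset.mem_insert.mp hζ with rfl | hζD
    · simp only [if_pos rfl]
      exact ⟨hkfresh, rankGE_iff_transfer (fun γ hγ => hγ.1) ((p.hs ζ hξ).2) hkgood⟩
    · have hne : ζ ≠ ξ := fun h => hmem (h ▸ hζD)
      simp only [if_neg hne]
      exact ⟨(p.hk ζ hζD).1, rankGE_iff_transfer (fun γ hγ => hγ.1)
        (p.hs ζ (p.hD hζD)).2 (p.hk ζ hζD).2⟩
  · refine ⟨subset_refl _, fun _ _ => rfl, Finset.subset_insert _ _, ?_⟩
    intro ζ hζ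
    have hne : ζ ≠ ξ := fun h => hmem (h ▸ hζ)
    simp only [if_neg hne]
  · exact Finset.mem_insert_self _ _
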